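/- Let c₁ > 0 and weights q_1, ..., q_{t′} ∈ (0,1]. Define b_t = c₁^{1/3}·((Σ_{τ=1}^t q_τ^{-1/2})^{2/3} - (Σ_{τ=1}^{t-1} q_τ^{-1/2})^{2/3}). Then: (a) b_t ≤ c₁^{1/3}·q_t^{-1/2}·(Σ_{τ=1}^t q_τ^{-1/2})^{-1/3} ≤ (c₁/q_t)^{1/3}, and (b) Σ_{t=1}^{t′} q_t·b_t ≤ c₁^{1/3}·(Σ_{t=1}^{t′} q_t^{-1/2}/Σ_{τ≤t} q_τ^{-1/2})^{1/3}·(Σ_{t=1}^{t′} q_t)^{2/3} ≤ c₁^{1/3}·(1 + log(Σ_{t=1}^{t′} q_t^{-1}))^{1/3}·(Σ_{t=1}^{t′} q_t)^{2/3} (Hölder's inequality with exponents 3 and 3/2, plus the harmonic-log bound). -/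

import Mathlib

open Finset Real

lemma inc_bound {B a : ℝ} (hB : 0 ≤ B) (ha : 0 < a) :
    (B + a) ^ ((2:ℝ)/3) - B ^ ((2:ℝ)/3) ≤ a * (B + a) ^ (-(1:ℝ)/3) := by
  have hA : 0 < B + a := by linarith
  have h13 : (0:ℝ) < (B + a) ^ ((1:ℝ)/3) := Real.rpow_pos_of_pos hA _
  rw [show -(1:ℝ)/3 = -(1/3) by ring, Real.rpow_neg hA.le, ← div_eq_mul_inv,
    le_div_iff₀ h13, sub_mul]
  have e1 : (B + a) ^ ((2:ℝ)/3) * (B + a) ^ ((1:ℝ)/3) = B + a := by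
    rw [← Real.rpow_add hA]; norm_num
  have e2 : B ≤ B ^ ((2:ℝ)/3) * (B + a) ^ ((1:ℝ)/3) := by
    have h := Real.rpow_add' hB (show (2:ℝ)/3 + 1/3 ≠ 0 by norm_num)
    norm_num at h
    calc B = B ^ ((2:ℝ)/3) * B ^ ((1:ℝ)/3) := by rw [← h]
      _ ≤ B ^ ((2:ℝ)/3) * (B + a) ^ ((1:ℝ)/3) :=
        mul_le_mul_of_nonneg_left
          (Real.rpow_le_rpow hB (by linarith) (by norm_num)) (Real.rpow_nonneg hB _)
  linarith

lemma harmonic_log (a : ℕ → ℝ) (ha : ∀ t, 1 ≤ a t) :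
    ∀ T : ℕ, ∑ t ∈ Finset.Icc 1 T, a t / (∑ τ ∈ Finset.Icc 1 t, a τ)
      ≤ 1 + Real.log (∑ τ ∈ Finset.Icc 1 T, a τ) := by
  have hpos : ∀ T : ℕ, 1 ≤ T → 0 < ∑ τ ∈ Finset.Icc 1 T, a τ := by
    intro T hT
    exact Finset.sum_pos (fun i _ => lt_of_lt_of_le one_pos (ha i))
      ⟨1, Finset.mem_Icc.2 ⟨le_refl 1, hT⟩⟩
  intro T
  induction T with
  | zero => simp
  | succ n ih =>
    rw [Finset.sum_Icc_succ_top (by omega : 1 ≤ n + 1)]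
    rcases Nat.eq_zero_or_pos n with rfl | hn
    · have h1 : (0:ℝ) < a 1 := lt_of_lt_of_le one_pos (ha 1)
      have hlog : Real.log (a 1) ≥ 0 := Real.log_nonneg (ha 1)
      have he : Finset.Icc 1 0 = (∅ : Finset ℕ) := Finset.Icc_eq_empty (by omega)
      simp only [zero_add, he, Finset.sum_empty, Finset.Icc_self, Finset.sum_singleton,
        div_self h1.ne', zero_add]
      linarith
    · set A := ∑ τ ∈ Finset.Icc 1 n, a τ with hAdef
      have hA : 0 < A := hpos n hn
      have hA' : 0 < A + a (n+1) := by have := ha (n+1); linarith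
      have hsum : ∑ τ ∈ Finset.Icc 1 (n+1), a τ = A + a (n+1) :=
        Finset.sum_Icc_succ_top (by omega) a
      rw [hsum]
      have key : a (n+1) / (A + a (n+1)) ≤ Real.log (A + a (n+1)) - Real.log A := by
        have hx : 0 < A / (A + a (n+1)) := div_pos hA hA'
        have h2 := Real.log_le_sub_one_of_pos hx
        rw [Real.log_div hA.ne' hA'.ne'] at h2
        have heq : A / (A + a (n+1)) - 1 = -(a (n+1) / (A + a (n+1))) := by
          field_simp
          ring
        linarith [heq ▸ h2]
      linarith

/-- Bounds on the 2/3-power bonus increments and their weighted sum. -/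
theorem two_thirds_bonus_bounds (c₁ : ℝ) (hc : 0 < c₁)
    (q : ℕ → ℝ) (t' : ℕ) (hq : ∀ t, 0 < q t ∧ q t ≤ 1)
    (b : ℕ → ℝ)
    (hb : ∀ t, b t = c₁ ^ ((1:ℝ)/3) *
      ((∑ τ ∈ Finset.Icc 1 t, (q τ) ^ (-(1:ℝ)/2)) ^ ((2:ℝ)/3)
        - (∑ τ ∈ Finset.Icc 1 (t - 1), (q τ) ^ (-(1:ℝ)/2)) ^ ((2:ℝ)/3))) :
    (∀ t ∈ Finset.Icc 1 t',
      b t ≤ c₁ ^ ((1:ℝ)/3) * (q t) ^ (-(1:ℝ)/2)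
              * (∑ τ ∈ Finset.Icc 1 t, (q τ) ^ (-(1:ℝ)/2)) ^ (-(1:ℝ)/3)
      ∧ c₁ ^ ((1:ℝ)/3) * (q t) ^ (-(1:ℝ)/2)
              * (∑ τ ∈ Finset.Icc 1 t, (q τ) ^ (-(1:ℝ)/2)) ^ (-(1:ℝ)/3)
          ≤ (c₁ / q t) ^ ((1:ℝ)/3))
    ∧ (∑ t ∈ Finset.Icc 1 t', q t * b t
        ≤ c₁ ^ ((1:ℝ)/3)
          * (∑ t ∈ Finset.Icc 1 t',
              (q t) ^ (-(1:ℝ)/2) / ∑ τ ∈ Finset.Icc 1 t, (q τ) ^ (-(1:ℝ)/2)) ^ ((1:ℝ)/3)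
          * (∑ t ∈ Finset.Icc 1 t', q t) ^ ((2:ℝ)/3))
    ∧ (c₁ ^ ((1:ℝ)/3)
          * (∑ t ∈ Finset.Icc 1 t',
              (q t) ^ (-(1:ℝ)/2) / ∑ τ ∈ Finset.Icc 1 t, (q τ) ^ (-(1:ℝ)/2)) ^ ((1:ℝ)/3)
          * (∑ t ∈ Finset.Icc 1 t', q t) ^ ((2:ℝ)/3)
        ≤ c₁ ^ ((1:ℝ)/3)
          * (1 + Real.log (∑ t ∈ Finset.Icc 1 t', (q t)⁻¹)) ^ ((1:ℝ)/3)
          * (∑ t ∈ Finset.Icc 1 t', q t) ^ ((2:ℝ)/3)) := by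
  have hq0 : ∀ t, 0 < q t := fun t => (hq t).1
  set sq : ℕ → ℝ := fun t => (q t) ^ (-(1:ℝ)/2) with hsqdef
  set S : ℕ → ℝ := fun t => ∑ τ ∈ Finset.Icc 1 t, sq τ with hSdef
  have hsqpos : ∀ t, 0 < sq t := fun t => Real.rpow_pos_of_pos (hq0 t) _
  have hsq1 : ∀ t, 1 ≤ sq t := by
    intro t
    have h1 : q t ^ ((1:ℝ)/2) ≤ 1 := Real.rpow_le_one (hq0 t).le (hq t).2 (by norm_num)
    have h2 : 0 < q t ^ ((1:ℝ)/2) := Real.rpow_pos_of_pos (hq0 t) _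
    have : sq t = (q t ^ ((1:ℝ)/2))⁻¹ := by
      rw [hsqdef]; simp only
      rw [show -(1:ℝ)/2 = -(1/2) by ring, Real.rpow_neg (hq0 t).le]
    rw [this]
    exact (one_le_inv₀ h2).2 h1
  have hSnonneg : ∀ t, 0 ≤ S t :=
    fun t => Finset.sum_nonneg fun i _ => (hsqpos i).le
  have hSpos : ∀ t, 1 ≤ t → 0 < S t := by
    intro t ht
    exact Finset.sum_pos (fun i _ => hsqpos i) ⟨1, Finset.mem_Icc.2 ⟨le_refl 1, ht⟩⟩
  have hSge : ∀ t, 1 ≤ t → sq t ≤ S t := by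
    intro t ht
    exact Finset.single_le_sum (fun i _ => (hsqpos i).le)
      (Finset.mem_Icc.2 ⟨ht, le_refl t⟩)
  -- part (a1), for all t ≥ 1
  have parta1 : ∀ t : ℕ, 1 ≤ t → b t ≤ c₁ ^ ((1:ℝ)/3) * sq t * (S t) ^ (-(1:ℝ)/3) := by
    intro t ht
    obtain ⟨n, rfl⟩ : ∃ n, t = n + 1 := ⟨t - 1, by omega⟩
    have hstep : S (n + 1) = S n + sq (n + 1) :=
      Finset.sum_Icc_succ_top (by omega) sq
    have hinc : (S n + sq (n+1)) ^ ((2:ℝ)/3) - (S n) ^ ((2:ℝ)/3)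
        ≤ sq (n+1) * (S n + sq (n+1)) ^ (-(1:ℝ)/3) :=
      inc_bound (hSnonneg n) (hsqpos (n+1))
    have hbt := hb (n+1)
    simp only [Nat.add_sub_cancel] at hbt
    rw [hbt]
    have hC : (0:ℝ) ≤ c₁ ^ ((1:ℝ)/3) := (Real.rpow_pos_of_pos hc _).le
    calc c₁ ^ ((1:ℝ)/3) * ((S (n+1)) ^ ((2:ℝ)/3) - (S n) ^ ((2:ℝ)/3))
        ≤ c₁ ^ ((1:ℝ)/3) * (sq (n+1) * (S (n+1)) ^ (-(1:ℝ)/3)) := by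
          apply mul_le_mul_of_nonneg_left _ hC
          rw [hstep]; exact hinc
      _ = c₁ ^ ((1:ℝ)/3) * sq (n+1) * (S (n+1)) ^ (-(1:ℝ)/3) := by ring
  -- part (a2), for all t ≥ 1
  have parta2 : ∀ t : ℕ, 1 ≤ t →
      c₁ ^ ((1:ℝ)/3) * sq t * (S t) ^ (-(1:ℝ)/3) ≤ (c₁ / q t) ^ ((1:ℝ)/3) := by
    intro t ht
    have hC : (0:ℝ) ≤ c₁ ^ ((1:ℝ)/3) := (Real.rpow_pos_of_pos hc _).le
    have h1 : (S t) ^ (-(1:ℝ)/3) ≤ (sq t) ^ (-(1:ℝ)/3) :=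
      Real.rpow_le_rpow_of_nonpos (hsqpos t) (hSge t ht) (by norm_num)
    have h2 : sq t * (sq t) ^ (-(1:ℝ)/3) = (sq t) ^ ((2:ℝ)/3) := by
      nth_rewrite 1 [← Real.rpow_one (sq t)]
      rw [← Real.rpow_add (hsqpos t)]; norm_num
    have h3 : (sq t) ^ ((2:ℝ)/3) = (q t) ^ (-(1:ℝ)/3) := by
      rw [hsqdef]; simp only
      rw [← Real.rpow_mul (hq0 t).le]; norm_num
    have h4 : sq t * (S t) ^ (-(1:ℝ)/3) ≤ (q t) ^ (-(1:ℝ)/3) := by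
      calc sq t * (S t) ^ (-(1:ℝ)/3) ≤ sq t * (sq t) ^ (-(1:ℝ)/3) :=
            mul_le_mul_of_nonneg_left h1 (hsqpos t).le
        _ = (q t) ^ (-(1:ℝ)/3) := by rw [h2, h3]
    have h5 : (c₁ / q t) ^ ((1:ℝ)/3) = c₁ ^ ((1:ℝ)/3) * (q t) ^ (-(1:ℝ)/3) := by
      rw [Real.div_rpow hc.le (hq0 t).le, show -(1:ℝ)/3 = -(1/3) by ring,
        Real.rpow_neg (hq0 t).le, div_eq_mul_inv]
    rw [h5, mul_assoc]
    exact mul_le_mul_of_nonneg_left h4 hC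
  refine ⟨fun t ht => ⟨parta1 t (Finset.mem_Icc.1 ht).1, parta2 t (Finset.mem_Icc.1 ht).1⟩,
    ?_, ?_⟩
  · -- part (b): Hölder
    have hC : (0:ℝ) ≤ c₁ ^ ((1:ℝ)/3) := (Real.rpow_pos_of_pos hc _).le
    have hterm : ∀ t ∈ Finset.Icc 1 t', q t * b t
        ≤ c₁ ^ ((1:ℝ)/3) * ((sq t / S t) ^ ((1:ℝ)/3) * (q t) ^ ((2:ℝ)/3)) := by
      intro t ht
      have ht1 : 1 ≤ t := (Finset.mem_Icc.1 ht).1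
      have hx : 0 < q t := hq0 t
      have hS : 0 < S t := hSpos t ht1
      have step1 : q t * b t ≤ q t * (c₁ ^ ((1:ℝ)/3) * sq t * (S t) ^ (-(1:ℝ)/3)) :=
        mul_le_mul_of_nonneg_left (parta1 t ht1) hx.le
      have h1 : q t * sq t = (q t) ^ ((1:ℝ)/2) := by
        rw [hsqdef]; simp only
        nth_rewrite 1 [← Real.rpow_one (q t)]
        rw [← Real.rpow_add hx]; norm_num
      have h2 : (sq t / S t) ^ ((1:ℝ)/3) = (q t) ^ (-(1:ℝ)/6) * (S t) ^ (-(1:ℝ)/3) := by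
        rw [div_eq_mul_inv, Real.mul_rpow (hsqpos t).le (inv_nonneg.2 hS.le),
          Real.inv_rpow hS.le, ← Real.rpow_neg hS.le, hsqdef]
        simp only
        rw [← Real.rpow_mul hx.le]
        norm_num
      have h3 : (q t) ^ (-(1:ℝ)/6) * (q t) ^ ((2:ℝ)/3) = (q t) ^ ((1:ℝ)/2) := by
        rw [← Real.rpow_add hx]; norm_num
      have heq : q t * (c₁ ^ ((1:ℝ)/3) * sq t * (S t) ^ (-(1:ℝ)/3))
          = c₁ ^ ((1:ℝ)/3) * ((sq t / S t) ^ ((1:ℝ)/3) * (q t) ^ ((2:ℝ)/3)) := by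
        rw [h2]
        calc q t * (c₁ ^ ((1:ℝ)/3) * sq t * (S t) ^ (-(1:ℝ)/3))
            = c₁ ^ ((1:ℝ)/3) * ((q t * sq t) * (S t) ^ (-(1:ℝ)/3)) := by ring
          _ = c₁ ^ ((1:ℝ)/3) * ((q t) ^ ((1:ℝ)/2) * (S t) ^ (-(1:ℝ)/3)) := by rw [h1]
          _ = c₁ ^ ((1:ℝ)/3) * (((q t) ^ (-(1:ℝ)/6) * (q t) ^ ((2:ℝ)/3)) * (S t) ^ (-(1:ℝ)/3)) := by
              rw [h3]
          _ = c₁ ^ ((1:ℝ)/3) * ((q t) ^ (-(1:ℝ)/6) * (S t) ^ (-(1:ℝ)/3) * (q t) ^ ((2:ℝ)/3)) := by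
              ring
      exact step1.trans_eq heq
    have hpq : Real.HolderConjugate 3 (3/2) := Real.holderConjugate_iff.mpr ⟨by norm_num, by norm_num⟩
    have hold := Real.inner_le_Lp_mul_Lq_of_nonneg (Finset.Icc 1 t')
      (f := fun t => (sq t / S t) ^ ((1:ℝ)/3)) (g := fun t => (q t) ^ ((2:ℝ)/3)) hpq
      (fun i _ => Real.rpow_nonneg (div_nonneg (hsqpos i).le (hSnonneg i)) _)
      (fun i _ => Real.rpow_nonneg (hq0 i).le _)
    have hfp : ∀ i : ℕ, ((sq i / S i) ^ ((1:ℝ)/3)) ^ (3:ℝ) = sq i / S i := by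
      intro i
      rw [← Real.rpow_mul (div_nonneg (hsqpos i).le (hSnonneg i))]
      norm_num
    have hgq : ∀ i : ℕ, ((q i) ^ ((2:ℝ)/3)) ^ ((3:ℝ)/2) = q i := by
      intro i
      rw [← Real.rpow_mul (hq0 i).le]
      norm_num
    simp only [hfp, hgq] at hold
    calc ∑ t ∈ Finset.Icc 1 t', q t * b t
        ≤ ∑ t ∈ Finset.Icc 1 t',
            c₁ ^ ((1:ℝ)/3) * ((sq t / S t) ^ ((1:ℝ)/3) * (q t) ^ ((2:ℝ)/3)) :=
          Finset.sum_le_sum hterm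
      _ = c₁ ^ ((1:ℝ)/3) * ∑ t ∈ Finset.Icc 1 t',
            (sq t / S t) ^ ((1:ℝ)/3) * (q t) ^ ((2:ℝ)/3) := by rw [Finset.mul_sum]
      _ ≤ c₁ ^ ((1:ℝ)/3) * ((∑ t ∈ Finset.Icc 1 t', sq t / S t) ^ ((1:ℝ)/3)
            * (∑ t ∈ Finset.Icc 1 t', q t) ^ ((2:ℝ)/3)) := by
          apply mul_le_mul_of_nonneg_left _ hC
          rw [show (1:ℝ)/(3/2) = (2:ℝ)/3 by norm_num] at hold; exact hold
      _ = c₁ ^ ((1:ℝ)/3) * (∑ t ∈ Finset.Icc 1 t', sq t / S t) ^ ((1:ℝ)/3)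
            * (∑ t ∈ Finset.Icc 1 t', q t) ^ ((2:ℝ)/3) := by ring
  · -- part (c): log bound
    have hC : (0:ℝ) ≤ c₁ ^ ((1:ℝ)/3) := (Real.rpow_pos_of_pos hc _).le
    have hXnn : 0 ≤ ∑ t ∈ Finset.Icc 1 t', sq t / S t :=
      Finset.sum_nonneg fun i _ => div_nonneg (hsqpos i).le (hSnonneg i)
    have hXZ : ∑ t ∈ Finset.Icc 1 t', sq t / S t
        ≤ 1 + Real.log (∑ t ∈ Finset.Icc 1 t', (q t)⁻¹) := by
      have h1 := harmonic_log sq hsq1 t'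
      have h2 : Real.log (S t') ≤ Real.log (∑ t ∈ Finset.Icc 1 t', (q t)⁻¹) := by
        rcases Nat.eq_zero_or_pos t' with rfl | ht'
        · simp [hSdef]
        · apply Real.log_le_log (hSpos t' ht')
          apply Finset.sum_le_sum
          intro i _
          have hqi : 1 ≤ (q i)⁻¹ := (one_le_inv₀ (hq0 i)).2 (hq i).2
          have e : sq i = ((q i)⁻¹) ^ ((1:ℝ)/2) := by
            rw [hsqdef]; simp only
            rw [Real.inv_rpow (hq0 i).le, ← Real.rpow_neg (hq0 i).le]
            norm_num
          rw [e]
          calc ((q i)⁻¹) ^ ((1:ℝ)/2) ≤ ((q i)⁻¹) ^ (1:ℝ) :=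
                Real.rpow_le_rpow_of_exponent_le hqi (by norm_num)
            _ = (q i)⁻¹ := Real.rpow_one _
      exact h1.trans (by linarith)
    have hpow : (∑ t ∈ Finset.Icc 1 t', sq t / S t) ^ ((1:ℝ)/3)
        ≤ (1 + Real.log (∑ t ∈ Finset.Icc 1 t', (q t)⁻¹)) ^ ((1:ℝ)/3) :=
      Real.rpow_le_rpow hXnn hXZ (by norm_num)
    have hY : (0:ℝ) ≤ (∑ t ∈ Finset.Icc 1 t', q t) ^ ((2:ℝ)/3) :=
      Real.rpow_nonneg (Finset.sum_nonneg fun i _ => (hq0 i).le) _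
    exact mul_le_mul_of_nonneg_right (mul_le_mul_of_nonneg_left hpow hC) hY
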